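/- Let K be a field of characteristic zero and c, c' ∈ K. The Kummer modules M_c and M_{c'}, where M_c is the K[z, z⁻¹]-module K[z, z⁻¹] equipped with the derivation operator ∂(f) = f' + (c/z)·f, are isomorphic as modules with connection (i.e., via a K[z,z⁻¹]-linear bijection commuting with the respective operators z·∂) if and only if c − c' is an integer. -/

import Mathlib

/-- Multiplication by `z` on Laurent polynomials `K[z, z⁻¹] = K[ℤ]`. -/
noncomputable def zmul (K : Type*) [Field K] : (ℤ →₀ K) →ₗ[K] (ℤ →₀ K) :=
  Finsupp.lsum K fun n => Finsupp.lsingle (n + 1)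

/-- The formal derivative `f ↦ f'` on Laurent polynomials: `zⁿ ↦ n z^(n-1)`. -/
noncomputable def zderiv (K : Type*) [Field K] : (ℤ →₀ K) →ₗ[K] (ℤ →₀ K) :=
  Finsupp.lsum K fun n => (Finsupp.lsingle (n - 1)).comp (LinearMap.lsmul K K (n : K))

/-- The Kummer connection operator `D_c f = z·f' + c·f` on the Kummer module
`M_c = K[z, z⁻¹]`, realized as the group algebra `AddMonoidAlgebra K ℤ`. -/
noncomputable def kummerD (K : Type*) [Field K] (c : K) (f : AddMonoidAlgebra K ℤ) :
    AddMonoidAlgebra K ℤ :=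
  let g : ℤ →₀ K := f.coeff
  AddMonoidAlgebra.ofCoeff (zmul K (zderiv K g) + c • g)

lemma theta_apply {K : Type*} [Field K] (f : ℤ →₀ K) (m : ℤ) :
    (zmul K (zderiv K f)) m = (m : K) * f m := by
  induction f using Finsupp.induction_linear with
  | zero => simp
  | add a b ha hb => simp [Finsupp.add_apply, ha, hb, mul_add]
  | single k a =>
      simp only [zmul, zderiv, Finsupp.lsum_single, LinearMap.comp_apply,
        LinearMap.lsmul_apply, Finsupp.lsingle_apply, smul_eq_mul, sub_add_cancel]
      rw [Finsupp.single_apply, Finsupp.single_apply]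
      split_ifs with h
      · subst h; ring
      · simp

lemma kummerD_apply {K : Type*} [Field K] (c : K) (f : AddMonoidAlgebra K ℤ) (m : ℤ) :
    (kummerD K c f).coeff m = ((m : K) + c) * f.coeff m := by
  have hrfl : ∀ g : AddMonoidAlgebra K ℤ, (kummerD K c g).coeff = zmul K (zderiv K g.coeff) + c • g.coeff := fun g => rfl
  rw [hrfl f, Finsupp.add_apply, Finsupp.smul_apply, theta_apply, smul_eq_mul]
  ring

lemma one_apply' {K : Type*} [Field K] (m : ℤ) :
    (1 : AddMonoidAlgebra K ℤ).coeff m = if m = 0 then 1 else 0 := by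
  rw [AddMonoidAlgebra.one_def, AddMonoidAlgebra.coeff_single, Finsupp.single_apply]
  simp [eq_comm]

/-- For `K` of characteristic zero, the Kummer modules `M_c` and `M_{c'}`
are isomorphic as modules with connection (a `K[z,z⁻¹]`-linear bijection `φ` with
`φ ∘ D_c = D_{c'} ∘ φ`) iff `c − c'` is an integer. -/
theorem stmt11 {K : Type*} [Field K] [CharZero K] (c c' : K) :
    (∃ φ : AddMonoidAlgebra K ℤ ≃ₗ[AddMonoidAlgebra K ℤ] AddMonoidAlgebra K ℤ,
        ∀ f, φ (kummerD K c f) = kummerD K c' (φ f)) ↔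
      ∃ n : ℤ, c - c' = (n : K) := by
  constructor
  · rintro ⟨φ, hφ⟩
    set u : AddMonoidAlgebra K ℤ := φ 1 with hu
    have hu0 : u ≠ 0 := by
      simp only [hu, ne_eq, EmbeddingLike.map_eq_zero_iff]
      exact one_ne_zero
    have h1 : φ (kummerD K c 1) = kummerD K c' u := hφ 1
    have hD1 : kummerD K c 1 = (AddMonoidAlgebra.single 0 c) * 1 := by
      ext m
      rw [mul_one, kummerD_apply, one_apply', AddMonoidAlgebra.coeff_single, Finsupp.single_apply]
      rcases eq_or_ne m 0 with h | h
      · subst h; simp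
      · simp [h, Ne.symm h]
    have h2 : AddMonoidAlgebra.single 0 c * u = kummerD K c' u := by
      have : φ (AddMonoidAlgebra.single 0 c * 1) = AddMonoidAlgebra.single 0 c * φ 1 := by
        rw [← smul_eq_mul, map_smul, smul_eq_mul]
      rw [← h1, hD1, this]
    obtain ⟨m, hm⟩ := Finsupp.support_nonempty_iff.mpr (show u.coeff ≠ 0 by simpa using hu0)
    have hm0 : u.coeff m ≠ 0 := Finsupp.mem_support_iff.mp hm
    have h3 : c * u.coeff m = ((m : K) + c') * u.coeff m := by
      have h := congrArg (fun g : AddMonoidAlgebra K ℤ => g.coeff m) h2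
      simp only [AddMonoidAlgebra.coeff_single_mul_apply, neg_zero, zero_add, kummerD_apply] at h
      exact h
    refine ⟨m, ?_⟩
    have h4 : c = (m : K) + c' := mul_right_cancel₀ hm0 h3
    rw [h4]; ring
  · rintro ⟨n, hn⟩
    have hone : AddMonoidAlgebra.single (n + -n) ((1 : K) * 1) = (1 : AddMonoidAlgebra K ℤ) := by
      rw [AddMonoidAlgebra.one_def]; norm_num
    have hone' : AddMonoidAlgebra.single (-n + n) ((1 : K) * 1) = (1 : AddMonoidAlgebra K ℤ) := by
      rw [AddMonoidAlgebra.one_def]; norm_num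
    refine ⟨{
      toFun := fun f => f * AddMonoidAlgebra.single n 1
      map_add' := fun a b => add_mul a b _
      map_smul' := fun r f => by simp [smul_eq_mul, mul_assoc]
      invFun := fun f => f * AddMonoidAlgebra.single (-n) 1
      left_inv := fun f => by
        show f * AddMonoidAlgebra.single n 1 * AddMonoidAlgebra.single (-n) 1 = f
        rw [mul_assoc, AddMonoidAlgebra.single_mul_single, hone, mul_one]
      right_inv := fun f => by
        show f * AddMonoidAlgebra.single (-n) 1 * AddMonoidAlgebra.single n 1 = f
        rw [mul_assoc, AddMonoidAlgebra.single_mul_single, hone', mul_one] }, ?_⟩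
    intro f
    show kummerD K c f * AddMonoidAlgebra.single n 1
        = kummerD K c' (f * AddMonoidAlgebra.single n 1)
    ext m
    rw [AddMonoidAlgebra.coeff_mul_single_apply, kummerD_apply, kummerD_apply,
      AddMonoidAlgebra.coeff_mul_single_apply]
    have h5 : ((m + -n : ℤ) : K) = (m : K) - (n : K) := by push_cast; ring
    have h6 : c = c' + (n : K) := by rw [← hn]; ring
    rw [h5, h6, mul_one, mul_one]
    ring
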